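/- Let E ⊆ [0,1] be a Cantor set obtained by the following iterated construction with parameters integers m > k ≥ 1: [0,1] is divided into m equal closed intervals and k of them are kept, and this is repeated inside each retained interval ad infinitum (the choice of retained intervals may vary). Then dim_H(E) ≥ log k / log m. -/

import Mathlib

open MeasureTheory Finset ENNReal

set_option maxHeartbeats 1000000

namespace Stmt11Aux

variable {m k : ℕ}

/-- The order-preserving selection of the `j`-th element of `T w`. -/
def sig (T : List (Fin m) → Finset (Fin m)) (hT : ∀ w, (T w).card = k)
    (w : List (Fin m)) (j : Fin k) : Fin m :=
  ((T w).orderIsoOfFin (hT w) j : Fin m)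

lemma sig_mem (T : List (Fin m) → Finset (Fin m)) (hT : ∀ w, (T w).card = k)
    (w : List (Fin m)) (j : Fin k) : sig T hT w j ∈ T w :=
  ((T w).orderIsoOfFin (hT w) j).2

lemma sig_inj (T : List (Fin m) → Finset (Fin m)) (hT : ∀ w, (T w).card = k)
    (w : List (Fin m)) {j j' : Fin k} (h : sig T hT w j = sig T hT w j') : j = j' := by
  have : ((T w).orderIsoOfFin (hT w) j) = ((T w).orderIsoOfFin (hT w) j') := Subtype.ext h
  exact ((T w).orderIsoOfFin (hT w)).injective this

/-- The word of the first `n` digits determined by the `Fin k`-digit sequence `e`. -/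
def W (T : List (Fin m) → Finset (Fin m)) (hT : ∀ w, (T w).card = k)
    (e : ℕ → Fin k) : ℕ → List (Fin m)
  | 0 => []
  | n + 1 => W T hT e n ++ [sig T hT (W T hT e n) (e n)]

/-- The `n`-th digit in base `m`. -/
def D (T : List (Fin m) → Finset (Fin m)) (hT : ∀ w, (T w).card = k)
    (e : ℕ → Fin k) (n : ℕ) : Fin m :=
  sig T hT (W T hT e n) (e n)

variable {T : List (Fin m) → Finset (Fin m)} {hT : ∀ w, (T w).card = k}

lemma W_succ (e : ℕ → Fin k) (n : ℕ) :
    W T hT e (n + 1) = W T hT e n ++ [D T hT e n] := rfl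

lemma W_ofFn (e : ℕ → Fin k) : ∀ n, W T hT e n = List.ofFn (fun i : Fin n => D T hT e i)
  | 0 => rfl
  | n + 1 => by
    rw [W_succ, W_ofFn e n, List.ofFn_succ']
    simp [List.concat_eq_append, D]

lemma D_mem (e : ℕ → Fin k) (n : ℕ) :
    D T hT e n ∈ T (List.ofFn fun i : Fin n => D T hT e i) := by
  rw [← W_ofFn]; exact sig_mem T hT _ _

lemma W_congr {e e' : ℕ → Fin k} : ∀ n, (∀ i < n, e i = e' i) → W T hT e n = W T hT e' n
  | 0, _ => rfl
  | n + 1, h => by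
    have hw : W T hT e n = W T hT e' n := W_congr n fun i hi => h i (Nat.lt_succ_of_lt hi)
    rw [W_succ, W_succ, D, D, hw, h n (Nat.lt_succ_self n)]

lemma D_congr {e e' : ℕ → Fin k} (n : ℕ) (h : ∀ i ≤ n, e i = e' i) :
    D T hT e n = D T hT e' n := by
  rw [D, D, W_congr n (fun i hi => h i hi.le), h n le_rfl]

/-- Numeric value of a word, base `m`. -/
def nv : List (Fin m) → ℕ := fun w => w.foldl (fun a c => m * a + (c : ℕ)) 0

lemma nv_append (w : List (Fin m)) (c : Fin m) : nv (w ++ [c]) = m * nv w + (c : ℕ) := by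
  simp [nv, List.foldl_append]

lemma nv_W_succ (e : ℕ → Fin k) (n : ℕ) :
    nv (W T hT e (n + 1)) = m * nv (W T hT e n) + (D T hT e n : ℕ) := by
  rw [W_succ, nv_append]

lemma nv_det {e e' : ℕ → Fin k} :
    ∀ N, nv (W T hT e N) = nv (W T hT e' N) → ∀ i < N, e i = e' i
  | 0, _, i, hi => absurd hi (Nat.not_lt_zero i)
  | N + 1, h, i, hi => by
    rw [nv_W_succ, nv_W_succ] at h
    have hm : 0 < m := (D T hT e N).pos
    have hb : (D T hT e N : ℕ) = (D T hT e' N : ℕ) := by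
      have h1 := congrArg (· % m) h
      simpa [Nat.mul_add_mod', Nat.mul_add_mod, Nat.mod_eq_of_lt (Fin.is_lt _)] using h1
    have ha : nv (W T hT e N) = nv (W T hT e' N) := by
      rw [hb] at h
      exact Nat.eq_of_mul_eq_mul_left hm (Nat.add_right_cancel h)
    rcases Nat.lt_succ_iff_lt_or_eq.mp hi with h' | rfl
    · exact nv_det N ha i h'
    · have hw : W T hT e i = W T hT e' i := W_congr i (nv_det i ha ·)
      apply sig_inj T hT (W T hT e i)
      show D T hT e i = sig T hT (W T hT e i) (e' i)
      rw [hw]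
      exact Fin.val_injective hb

/-! ### Real values -/

/-- The real number with base-`m` digits `d`. -/
noncomputable def Phi (m : ℕ) (d : ℕ → Fin m) : ℝ := ∑' n, (d n : ℝ) / (m : ℝ) ^ (n + 1)

lemma term_le (hm : 1 < m) (d : ℕ → Fin m) (n : ℕ) :
    (d n : ℝ) / (m : ℝ) ^ (n + 1) ≤ (1 / m : ℝ) ^ n := by
  have hm0 : (0:ℝ) < m := by exact_mod_cast Nat.lt_of_lt_of_le Nat.zero_lt_one hm.le
  have hd : (d n : ℝ) ≤ m := by exact_mod_cast (d n).is_lt.le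
  calc (d n : ℝ) / (m : ℝ) ^ (n + 1) ≤ (m : ℝ) / (m : ℝ) ^ (n + 1) := by gcongr
    _ = (1 / m : ℝ) ^ n := by
        rw [div_pow, one_pow, pow_succ]
        field_simp

lemma one_div_m_lt_one (hm : 1 < m) : (1 / m : ℝ) < 1 := by
  have hm0 : (0:ℝ) < m := by exact_mod_cast Nat.lt_of_lt_of_le Nat.zero_lt_one hm.le
  rw [div_lt_one hm0]
  exact_mod_cast hm

lemma summable_phi (hm : 1 < m) (d : ℕ → Fin m) :
    Summable fun n => (d n : ℝ) / (m : ℝ) ^ (n + 1) := by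
  have hm0 : (0:ℝ) < m := by exact_mod_cast Nat.lt_of_lt_of_le Nat.zero_lt_one hm.le
  refine Summable.of_nonneg_of_le (fun n => by positivity) (term_le hm d) ?_
  exact summable_geometric_of_lt_one (by positivity) (one_div_m_lt_one hm)

lemma partial_le_Phi (hm : 1 < m) (d : ℕ → Fin m) (N : ℕ) :
    ∑ n ∈ range N, (d n : ℝ) / (m : ℝ) ^ (n + 1) ≤ Phi m d := by
  have hsum := summable_phi hm d
  have hkey := Summable.sum_add_tsum_nat_add N hsum
  have htail : 0 ≤ ∑' i, (d (i + N) : ℝ) / (m : ℝ) ^ (i + N + 1) :=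
    tsum_nonneg fun i => by positivity
  rw [Phi, ← hkey]
  linarith

lemma Phi_le_partial (hm : 1 < m) (d : ℕ → Fin m) (N : ℕ) :
    Phi m d ≤ ∑ n ∈ range N, (d n : ℝ) / (m : ℝ) ^ (n + 1) + (1 / m : ℝ) ^ N := by
  have hm0 : (0:ℝ) < m := by exact_mod_cast Nat.lt_of_lt_of_le Nat.zero_lt_one hm.le
  have hm1 : (1:ℝ) < m := by exact_mod_cast hm
  have hsum := summable_phi hm d
  have hkey := Summable.sum_add_tsum_nat_add N hsum
  have hgs : Summable fun i : ℕ => (((m:ℝ) - 1) / (m : ℝ) ^ (N + 1)) * (1 / m : ℝ) ^ i :=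
    (summable_geometric_of_lt_one (by positivity) (one_div_m_lt_one hm)).mul_left _
  have hterm : ∀ i : ℕ, (d (i + N) : ℝ) / (m : ℝ) ^ (i + N + 1) ≤
      (((m:ℝ) - 1) / (m : ℝ) ^ (N + 1)) * (1 / m : ℝ) ^ i := by
    intro i
    have hd : (d (i + N) : ℝ) ≤ (m : ℝ) - 1 := by
      have : ((d (i + N) : ℕ) : ℝ) + 1 ≤ (m : ℝ) := by exact_mod_cast (d (i + N)).is_lt
      linarith
    have heq : (((m:ℝ) - 1) / (m : ℝ) ^ (N + 1)) * (1 / m : ℝ) ^ i =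
        ((m:ℝ) - 1) / (m : ℝ) ^ (i + N + 1) := by
      rw [div_pow, one_pow]
      rw [div_mul_div_comm, mul_one, ← pow_add]
      ring_nf
    rw [heq]
    gcongr
  have htail : (∑' i, (d (i + N) : ℝ) / (m : ℝ) ^ (i + N + 1)) ≤ (1 / m : ℝ) ^ N := by
    have h1 : (∑' i, (d (i + N) : ℝ) / (m : ℝ) ^ (i + N + 1)) ≤
        ∑' i : ℕ, (((m:ℝ) - 1) / (m : ℝ) ^ (N + 1)) * (1 / m : ℝ) ^ i := by
      refine Summable.tsum_le_tsum hterm ?_ hgs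
      exact (summable_nat_add_iff N).mpr hsum
    have h2 : (∑' i : ℕ, (((m:ℝ) - 1) / (m : ℝ) ^ (N + 1)) * (1 / m : ℝ) ^ i) =
        (((m:ℝ) - 1) / (m : ℝ) ^ (N + 1)) * ((1:ℝ) - 1/(m:ℝ))⁻¹ := by
      rw [tsum_mul_left, tsum_geometric_of_lt_one (by positivity) (one_div_m_lt_one hm)]
    have h3 : (((m:ℝ) - 1) / (m : ℝ) ^ (N + 1)) * ((1:ℝ) - 1/m)⁻¹ = (1 / m : ℝ) ^ N := by
      have hm1' : (m:ℝ) - 1 ≠ 0 := by linarith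
      have h1m : (1:ℝ) - 1/m = ((m:ℝ) - 1)/m := by field_simp
      rw [h1m, inv_div, div_pow, one_pow, pow_succ]
      field_simp
    rw [h2, h3] at h1
    exact h1
  rw [Phi, ← hkey]
  linarith

lemma nv_div (hm : 1 < m) (e : ℕ → Fin k) : ∀ N : ℕ,
    (nv (W T hT e N) : ℝ) / (m : ℝ) ^ N = ∑ n ∈ range N, ((D T hT e n : ℕ) : ℝ) / (m : ℝ) ^ (n + 1)
  | 0 => by simp [W, nv]
  | N + 1 => by
    have hm0 : (0:ℝ) < m := by exact_mod_cast Nat.lt_of_lt_of_le Nat.zero_lt_one hm.le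
    rw [sum_range_succ, ← nv_div hm e N, nv_W_succ]
    push_cast
    field_simp
    ring

/-! ### Digits of a real number in base `k` -/

/-- `n`-th digit of `y` in base `k`. -/
noncomputable def dg (k : ℕ) (y : ℝ) (n : ℕ) : ℕ := (⌊(k : ℝ) ^ (n + 1) * y⌋ % (k : ℤ)).toNat

lemma dg_lt (hk : 0 < k) (y : ℝ) (n : ℕ) : dg k y n < k := by
  have h1 : 0 ≤ ⌊(k : ℝ) ^ (n + 1) * y⌋ % (k : ℤ) :=
    Int.emod_nonneg _ (by exact_mod_cast hk.ne')
  have h2 : ⌊(k : ℝ) ^ (n + 1) * y⌋ % (k : ℤ) < (k : ℤ) :=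
    Int.emod_lt_of_pos _ (by exact_mod_cast hk)
  unfold dg; omega

/-- digits as `Fin k`. -/
noncomputable def edg (hk : 0 < k) (y : ℝ) (n : ℕ) : Fin k := ⟨dg k y n, dg_lt hk y n⟩

lemma floor_step (hk : 0 < k) (y : ℝ) (n : ℕ) :
    ⌊(k : ℝ) ^ (n + 1) * y⌋ = k * ⌊(k : ℝ) ^ n * y⌋ + dg k y n := by
  have hk0 : (0:ℝ) < k := by exact_mod_cast hk
  have hknz : (k:ℤ) ≠ 0 := by exact_mod_cast hk.ne'
  set q := ⌊(k : ℝ) ^ (n + 1) * y⌋ with hq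
  have hnn : 0 ≤ q % k := Int.emod_nonneg _ hknz
  have hlt : q % k < k := Int.emod_lt_of_pos _ (by exact_mod_cast hk)
  have hde := Int.mul_ediv_add_emod q (k : ℤ)
  have hql : (q:ℝ) ≤ (k:ℝ) ^ (n + 1) * y := Int.floor_le _
  have hqu : (k:ℝ) ^ (n + 1) * y < q + 1 := Int.lt_floor_add_one _
  have hpow : (k:ℝ) ^ (n + 1) * y = (k:ℝ) * ((k:ℝ) ^ n * y) := by ring
  have hfl : ⌊(k : ℝ) ^ n * y⌋ = q / k := by
    refine Int.floor_eq_iff.mpr ⟨?_, ?_⟩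
    · have h1 : ((k * (q / k) : ℤ) : ℝ) ≤ (k:ℝ) ^ (n + 1) * y := by
        refine le_trans ?_ hql
        exact_mod_cast (by omega : (k:ℤ) * (q / k) ≤ q)
      rw [hpow] at h1
      push_cast at h1
      nlinarith [h1]
    · have h2 : (k:ℝ) ^ (n + 1) * y < ((k * (q / k) + k : ℤ) : ℝ) := by
        refine lt_of_lt_of_le hqu ?_
        exact_mod_cast (by omega : q + 1 ≤ (k:ℤ) * (q / k) + k)
      rw [hpow] at h2
      push_cast at h2
      nlinarith [h2]
  have hdg : (dg k y n : ℤ) = q % k := by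
    rw [dg, ← hq]
    exact Int.toNat_of_nonneg hnn
  rw [hfl]
  omega

lemma floor_prefix (hk : 0 < k) {y y' : ℝ} (hy : ⌊y⌋ = ⌊y'⌋) :
    ∀ N, (∀ i < N, dg k y i = dg k y' i) → ⌊(k : ℝ) ^ N * y⌋ = ⌊(k : ℝ) ^ N * y'⌋ := by
  intro N
  induction N with
  | zero => intro _; simpa using hy
  | succ N ih =>
    intro h
    rw [floor_step hk y N, floor_step hk y' N,
      ih (fun i hi => h i (Nat.lt_succ_of_lt hi)), h N (Nat.lt_succ_self N)]


/-! ### The natural measure on the Cantor set -/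

section MeasurePart

variable (T : List (Fin m) → Finset (Fin m)) (hT : ∀ w, (T w).card = k)

/-- The coding map sending `y ∈ [0,1)` into the Cantor set via its base-`k` digits. -/
noncomputable def F (hk : 0 < k) : ℝ → ℝ := fun y => Phi m fun n => D T hT (edg hk y) n

lemma meas_edg (hk : 0 < k) (n : ℕ) : Measurable fun y : ℝ => edg hk y n := by
  have h1 : Measurable fun y : ℝ => ⌊(k : ℝ) ^ (n + 1) * y⌋ :=
    Int.measurable_floor.comp (measurable_id.const_mul _)
  have h2 : (fun y : ℝ => edg hk y n) =
      (fun z : ℤ => (⟨(z % (k : ℤ)).toNat, by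
        have h1 : 0 ≤ z % (k : ℤ) := Int.emod_nonneg _ (by exact_mod_cast hk.ne')
        have h2 : z % (k : ℤ) < k := Int.emod_lt_of_pos _ (by exact_mod_cast hk)
        omega⟩ : Fin k)) ∘ (fun y : ℝ => ⌊(k : ℝ) ^ (n + 1) * y⌋) := rfl
  rw [h2]
  exact Measurable.of_discrete.comp h1

lemma meas_D (hk : 0 < k) (n : ℕ) : Measurable fun y : ℝ => D T hT (edg hk y) n := by
  have hcomp : (fun y : ℝ => D T hT (edg hk y) n) =
      (fun v : Fin (n + 1) → Fin k =>
          D T hT (fun i => v ⟨i % (n + 1), Nat.mod_lt _ n.succ_pos⟩) n)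
        ∘ (fun y : ℝ => fun j : Fin (n + 1) => edg hk y (j : ℕ)) := by
    funext y
    refine D_congr n fun i hi => ?_
    simp only [Function.comp]
    congr 1
    exact (Nat.mod_eq_of_lt (Nat.lt_succ_of_le hi)).symm
  rw [hcomp]
  exact Measurable.of_discrete.comp (measurable_pi_lambda _ fun j => meas_edg hk (j : ℕ))

lemma meas_F (hm : 1 < m) (hk : 0 < k) : Measurable (F T hT hk) := by
  have hmeas : ∀ N : ℕ, Measurable fun y : ℝ =>
      ∑ n ∈ range N, ((D T hT (edg hk y) n : ℕ) : ℝ) / (m : ℝ) ^ (n + 1) := by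
    intro N
    refine Finset.measurable_sum _ fun n _ => ?_
    have h1 : Measurable fun y : ℝ => ((D T hT (edg hk y) n : ℕ) : ℝ) :=
      (Measurable.of_discrete (f := fun j : Fin m => ((j : ℕ) : ℝ))).comp (meas_D T hT hk n)
    exact h1.div_const _
  refine measurable_of_tendsto_metrizable hmeas ?_
  rw [tendsto_pi_nhds]
  intro y
  exact (summable_phi hm _).hasSum.tendsto_sum_nat

/-- The mass distribution on the Cantor set. -/
noncomputable def mu (hk : 0 < k) : Measure ℝ :=
  (volume.restrict (Set.Ico (0 : ℝ) 1)).map (F T hT hk)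

lemma mu_E (hm : 1 < m) (hk : 0 < k) (E : Set ℝ)
    (hE : E = { x : ℝ | ∃ d : ℕ → Fin m,
        (∀ n : ℕ, d n ∈ T (List.ofFn (fun i : Fin n => d i))) ∧
        x = ∑' n : ℕ, (d n : ℝ) / m ^ (n + 1) }) :
    1 ≤ mu T hT hk E := by
  have hpre : (F T hT hk) ⁻¹' E = Set.univ := by
    ext y
    simp only [Set.mem_preimage, Set.mem_univ, iff_true, hE, Set.mem_setOf_eq]
    exact ⟨fun n => D T hT (edg hk y) n, fun n => D_mem _ _, rfl⟩
  have h := Measure.le_map_apply (μ := volume.restrict (Set.Ico (0 : ℝ) 1))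
    (meas_F T hT hm hk).aemeasurable E
  rw [hpre] at h
  calc (1 : ℝ≥0∞) = (volume.restrict (Set.Ico (0 : ℝ) 1)) Set.univ := by
        rw [Measure.restrict_apply_univ, Real.volume_Ico]
        norm_num
    _ ≤ mu T hT hk E := h

lemma cell (hk : 0 < k) (N : ℕ) (c : ℤ) :
    volume {y ∈ Set.Ico (0 : ℝ) 1 | (nv (W T hT (edg hk y) N) : ℤ) = c} ≤ ((k : ℝ≥0∞))⁻¹ ^ N := by
  set S := {y ∈ Set.Ico (0 : ℝ) 1 | (nv (W T hT (edg hk y) N) : ℤ) = c} with hS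
  rcases Set.eq_empty_or_nonempty S with h | ⟨y1, hy1⟩
  · simp [h]
  have hk0 : (0 : ℝ) < k := by exact_mod_cast hk
  set c' := ⌊(k : ℝ) ^ N * y1⌋ with hc'
  have hsub : S ⊆ Set.Ico ((c' : ℝ) / (k : ℝ) ^ N) (((c' : ℝ) + 1) / (k : ℝ) ^ N) := by
    intro y hy
    obtain ⟨hy01, hnv⟩ := hy
    obtain ⟨hy101, hnv1⟩ := hy1
    have hnveq : nv (W T hT (edg hk y) N) = nv (W T hT (edg hk y1) N) := by
      exact_mod_cast hnv.trans hnv1.symm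
    have hdig : ∀ i < N, dg k y i = dg k y1 i := fun i hi =>
      congrArg Fin.val (nv_det N hnveq i hi)
    have hfloor0 : ⌊y⌋ = ⌊y1⌋ := by
      rw [Int.floor_eq_zero_iff.mpr hy01, Int.floor_eq_zero_iff.mpr hy101]
    have hfl : ⌊(k : ℝ) ^ N * y⌋ = c' := by
      rw [hc']; exact floor_prefix hk hfloor0 N hdig
    have hpk : (0 : ℝ) < (k : ℝ) ^ N := by positivity
    constructor
    · rw [div_le_iff₀ hpk]
      have h1 : (c' : ℝ) ≤ (k : ℝ) ^ N * y := by rw [← hfl]; exact Int.floor_le _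
      linarith [h1, mul_comm ((k : ℝ) ^ N) y]
    · rw [lt_div_iff₀ hpk]
      have h2 : (k : ℝ) ^ N * y < (c' : ℝ) + 1 := by rw [← hfl]; exact Int.lt_floor_add_one _
      linarith [h2, mul_comm ((k : ℝ) ^ N) y]
  calc volume S ≤ volume (Set.Ico ((c' : ℝ) / (k : ℝ) ^ N) (((c' : ℝ) + 1) / (k : ℝ) ^ N)) :=
        measure_mono hsub
    _ = ENNReal.ofReal (((c' : ℝ) + 1) / (k : ℝ) ^ N - (c' : ℝ) / (k : ℝ) ^ N) := Real.volume_Ico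
    _ = ((k : ℝ≥0∞))⁻¹ ^ N := by
        rw [div_sub_div_same]
        have h3 : (c' : ℝ) + 1 - c' = 1 := by ring
        rw [h3, one_div, ENNReal.ofReal_inv_of_pos (by positivity),
          ENNReal.ofReal_pow (by positivity), ENNReal.ofReal_natCast, ENNReal.inv_pow]

lemma core (hm : 1 < m) (hk : 0 < k) (N : ℕ) (y0 : ℝ) :
    mu T hT hk (Metric.closedBall y0 ((1 / m : ℝ) ^ N)) ≤ 5 * ((k : ℝ≥0∞))⁻¹ ^ N := by
  have hm0 : (0 : ℝ) < m := by exact_mod_cast Nat.lt_of_lt_of_le Nat.zero_lt_one hm.le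
  have hFmeas := meas_F T hT hm hk
  rw [mu, Measure.map_apply hFmeas measurableSet_closedBall,
    Measure.restrict_apply (hFmeas measurableSet_closedBall)]
  set c0 := ⌊(m : ℝ) ^ N * y0⌋ with hc0
  have hsub : F T hT hk ⁻¹' Metric.closedBall y0 ((1 / m : ℝ) ^ N) ∩ Set.Ico (0 : ℝ) 1 ⊆
      ⋃ c ∈ Finset.Icc (c0 - 2) (c0 + 2),
        {y ∈ Set.Ico (0 : ℝ) 1 | (nv (W T hT (edg hk y) N) : ℤ) = c} := by
    rintro y ⟨hyb, hy01⟩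
    simp only [Set.mem_iUnion, Finset.mem_Icc, exists_prop]
    refine ⟨(nv (W T hT (edg hk y) N) : ℤ), ⟨?_, ?_⟩, hy01, rfl⟩ <;>
    · have hFyb : |F T hT hk y - y0| ≤ (1 / m : ℝ) ^ N := by
        have := Metric.mem_closedBall.mp hyb
        rwa [Real.dist_eq] at this
      set v := (nv (W T hT (edg hk y) N) : ℝ) / (m : ℝ) ^ N with hv
      have hv1 : v ≤ F T hT hk y := by
        rw [hv, nv_div hm (edg hk y) N]
        exact partial_le_Phi hm _ N
      have hv2 : F T hT hk y ≤ v + (1 / m : ℝ) ^ N := by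
        rw [hv, nv_div hm (edg hk y) N]
        exact Phi_le_partial hm _ N
      have hpowpos : (0 : ℝ) < (m : ℝ) ^ N := by positivity
      have hmul : (1 / m : ℝ) ^ N * (m : ℝ) ^ N = 1 := by
        rw [← mul_pow, one_div_mul_cancel hm0.ne', one_pow]
      have habs := abs_le.mp hFyb
      have hnvle : ((nv (W T hT (edg hk y) N) : ℝ)) ≤ (m : ℝ) ^ N * y0 + 2 := by
        have h := hv1.trans (by linarith [habs.2] : F T hT hk y ≤ y0 + (1 / m : ℝ) ^ N)
        rw [hv, div_le_iff₀ hpowpos] at h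
        nlinarith [hmul, hpowpos, pow_le_one₀ (by positivity : (0:ℝ) ≤ 1/(m:ℝ)) (by
          rw [div_le_one hm0]; exact_mod_cast hm.le : (1/m:ℝ) ≤ 1) (n := N)]
      have hnvge : (m : ℝ) ^ N * y0 - 2 ≤ ((nv (W T hT (edg hk y) N) : ℝ)) := by
        have h : y0 - 2 * (1 / m : ℝ) ^ N ≤ v := by linarith [habs.1]
        rw [hv, le_div_iff₀ hpowpos] at h
        nlinarith [hmul, hpowpos, pow_le_one₀ (by positivity : (0:ℝ) ≤ 1/(m:ℝ)) (by
          rw [div_le_one hm0]; exact_mod_cast hm.le : (1/m:ℝ) ≤ 1) (n := N)]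
      have hfl1 : (c0 : ℝ) ≤ (m : ℝ) ^ N * y0 := Int.floor_le _
      have hfl2 : (m : ℝ) ^ N * y0 < (c0 : ℝ) + 1 := Int.lt_floor_add_one _
      have hlow : (c0 - 3 : ℤ) < (nv (W T hT (edg hk y) N) : ℤ) := by
        have h' : ((c0 - 3 : ℤ) : ℝ) < ((nv (W T hT (edg hk y) N) : ℤ) : ℝ) := by
          push_cast; linarith
        exact_mod_cast h'
      have hhigh : (nv (W T hT (edg hk y) N) : ℤ) < (c0 + 3 : ℤ) := by
        have h' : ((nv (W T hT (edg hk y) N) : ℤ) : ℝ) < ((c0 + 3 : ℤ) : ℝ) := by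
          push_cast; linarith
        exact_mod_cast h'
      omega
  calc (volume : Measure ℝ) (F T hT hk ⁻¹' Metric.closedBall y0 ((1 / m : ℝ) ^ N) ∩ Set.Ico (0 : ℝ) 1)
      ≤ volume (⋃ c ∈ Finset.Icc (c0 - 2) (c0 + 2),
          {y ∈ Set.Ico (0 : ℝ) 1 | (nv (W T hT (edg hk y) N) : ℤ) = c}) := measure_mono hsub
    _ ≤ ∑ c ∈ Finset.Icc (c0 - 2) (c0 + 2),
          volume {y ∈ Set.Ico (0 : ℝ) 1 | (nv (W T hT (edg hk y) N) : ℤ) = c} :=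
        measure_biUnion_finset_le _ _
    _ ≤ ∑ _c ∈ Finset.Icc (c0 - 2) (c0 + 2), ((k : ℝ≥0∞))⁻¹ ^ N :=
        Finset.sum_le_sum fun c _ => cell T hT hk N c
    _ = 5 * ((k : ℝ≥0∞))⁻¹ ^ N := by
        rw [Finset.sum_const, Int.card_Icc]
        norm_num
        rw [show (c0 + 2 + 1 - (c0 - 2)) = 5 by ring]
        rfl

end MeasurePart

end Stmt11Aux

theorem stmt11 (m k : ℕ) (hk : 1 ≤ k) (hkm : k < m)
    (T : List (Fin m) → Finset (Fin m)) (hT : ∀ w, (T w).card = k)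
    (E : Set ℝ)
    (hE : E = { x : ℝ | ∃ d : ℕ → Fin m,
        (∀ n : ℕ, d n ∈ T (List.ofFn (fun i : Fin n => d i))) ∧
        x = ∑' n : ℕ, (d n : ℝ) / m ^ (n + 1) }) :
    ENNReal.ofReal (Real.log k / Real.log m) ≤ dimH E := by
  classical
  open Stmt11Aux in
  rcases eq_or_lt_of_le hk with hk1 | hk2
  · -- trivial case k = 1
    rw [← hk1]
    simp
  · -- main case 2 ≤ k
    have hk0 : 0 < k := hk
    have hm2 : 1 < m := lt_trans hk2 hkm
    have hm0 : (0 : ℝ) < m := by exact_mod_cast lt_trans Nat.zero_lt_one hm2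
    have hk0' : (0 : ℝ) < k := by exact_mod_cast hk0
    have hm1 : (1 : ℝ) < m := by exact_mod_cast hm2
    have hk1' : (1 : ℝ) < k := by exact_mod_cast hk2
    set α := Real.log k / Real.log m with hα
    have hlogm : 0 < Real.log m := Real.log_pos hm1
    have hlogk : 0 < Real.log k := Real.log_pos hk1'
    have hα0 : 0 ≤ α := le_of_lt (div_pos hlogk hlogm)
    have hrpow : ∀ j : ℕ, (((1 / (m : ℝ)) ^ j) : ℝ) ^ α = (1 / (k : ℝ)) ^ j := by
      intro j
      have hx : (0 : ℝ) < (1 / (m : ℝ)) ^ j := by positivity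
      rw [Real.rpow_def_of_pos hx,
        ← Real.exp_log (show (0 : ℝ) < (1 / (k : ℝ)) ^ j by positivity)]
      congr 1
      rw [Real.log_pow, Real.log_pow, one_div, one_div, Real.log_inv, Real.log_inv, hα]
      field_simp
    set μ := Stmt11Aux.mu T hT hk0 with hμ
    set ν := ((5 * (k : ℝ≥0∞)))⁻¹ • μ with hν
    have h5k0 : (5 * (k : ℝ≥0∞)) ≠ 0 := by
      simp [hk0.ne']
    have h5kt : (5 * (k : ℝ≥0∞)) ≠ ⊤ := by
      simp [ENNReal.mul_ne_top, ENNReal.natCast_ne_top]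
    have hν_le : ν ≤ μH[α] := by
      refine Measure.le_hausdorffMeasure α ν (ENNReal.ofReal (1 / m))
        (ENNReal.ofReal_pos.mpr (by positivity)) ?_
      intro s hs
      have hνs : ∀ t : Set ℝ, ν t = (5 * (k : ℝ≥0∞))⁻¹ * μ t := fun t => rfl
      by_cases h0 : EMetric.diam s = 0
      · rcases Set.eq_empty_or_nonempty s with rfl | ⟨y0, hy0⟩
        · simp
        · have hsub : ∀ N : ℕ, s ⊆ Metric.closedBall y0 ((1 / m : ℝ) ^ N) := by
            intro N x hx
            have h1 : edist x y0 = 0 :=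
              le_antisymm (le_trans (EMetric.edist_le_diam_of_mem hx hy0) h0.le) zero_le
            have h2 : x = y0 := by
              rwa [edist_eq_zero] at h1
            rw [h2]
            exact Metric.mem_closedBall_self (by positivity)
          have htend : Filter.Tendsto (fun N : ℕ => 5 * ((k : ℝ≥0∞))⁻¹ ^ N)
              Filter.atTop (nhds 0) := by
            have hlt1 : ((k : ℝ≥0∞))⁻¹ < 1 :=
              ENNReal.inv_lt_one.mpr (by exact_mod_cast hk2)
            have := ENNReal.tendsto_pow_atTop_nhds_zero_of_lt_one hlt1
            have h5 := ENNReal.Tendsto.const_mul (a := (5 : ℝ≥0∞)) this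
              (Or.inr (by norm_num))
            simpa using h5
          have hμs : μ s = 0 := by
            refine le_antisymm ?_ zero_le
            have hb : ∀ N : ℕ, μ s ≤ 5 * ((k : ℝ≥0∞))⁻¹ ^ N := fun N =>
              (measure_mono (hsub N)).trans (Stmt11Aux.core T hT hm2 hk0 N y0)
            exact ge_of_tendsto' htend hb
          rw [hνs s, hμs, mul_zero]
          exact zero_le
      · -- positive diameter
        have hfin : EMetric.diam s ≠ ⊤ :=
          (lt_of_le_of_lt hs ENNReal.ofReal_lt_top).ne
        set δ := (EMetric.diam s).toReal with hδ
        have hδpos : 0 < δ := ENNReal.toReal_pos h0 hfin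
        have hδle : δ ≤ 1 / m := ENNReal.toReal_le_of_le_ofReal (by positivity) hs
        have h1m1 : (1 / (m : ℝ)) < 1 := by
          rw [div_lt_one hm0]; exact hm1
        have h1m0 : (0 : ℝ) ≤ 1 / m := by positivity
        have hex : ∃ n : ℕ, (1 / (m : ℝ)) ^ (n + 1) < δ := by
          obtain ⟨n, hn⟩ := exists_pow_lt_of_lt_one hδpos h1m1
          exact ⟨n, lt_of_le_of_lt
            (pow_le_pow_of_le_one h1m0 h1m1.le (Nat.le_succ n)) hn⟩
        set N := Nat.find hex with hN
        have hN1 : (1 / (m : ℝ)) ^ (N + 1) < δ := Nat.find_spec hex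
        have hN2 : δ ≤ (1 / (m : ℝ)) ^ N := by
          rcases Nat.eq_zero_or_pos N with h | h
          · rw [h, pow_zero]
            exact hδle.trans (by linarith)
          · have hmin := Nat.find_min hex (Nat.pred_lt h.ne')
            have hNp : N.pred + 1 = N := Nat.succ_pred_eq_of_pos h
            rw [hNp] at hmin
            exact not_lt.mp hmin
        obtain ⟨y0, hy0⟩ : s.Nonempty := by
          rcases Set.eq_empty_or_nonempty s with rfl | h
          · exact absurd EMetric.diam_empty h0
          · exact h
        have hsub : s ⊆ Metric.closedBall y0 ((1 / m : ℝ) ^ N) := by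
          intro x hx
          have h1 : edist x y0 ≤ EMetric.diam s := EMetric.edist_le_diam_of_mem hx hy0
          have h2 : dist x y0 ≤ δ := by
            rw [dist_edist, hδ]
            exact ENNReal.toReal_mono hfin h1
          exact Metric.mem_closedBall.mpr (h2.trans hN2)
        have hμb : μ s ≤ 5 * ((k : ℝ≥0∞))⁻¹ ^ N :=
          (measure_mono hsub).trans (Stmt11Aux.core T hT hm2 hk0 N y0)
        have hνb : ν s ≤ ((k : ℝ≥0∞))⁻¹ ^ (N + 1) := by
          rw [hνs s]
          calc (5 * (k : ℝ≥0∞))⁻¹ * μ s ≤ (5 * (k : ℝ≥0∞))⁻¹ * (5 * ((k : ℝ≥0∞))⁻¹ ^ N) := by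
                gcongr
            _ = ((k : ℝ≥0∞))⁻¹ ^ (N + 1) := by
                rw [ENNReal.mul_inv (Or.inl (by norm_num)) (Or.inl (by norm_num))]
                rw [mul_mul_mul_comm, ENNReal.inv_mul_cancel (by norm_num) (by norm_num),
                  one_mul, ← pow_succ']
        have hkey : ((k : ℝ≥0∞))⁻¹ ^ (N + 1) ≤ EMetric.diam s ^ α := by
          have e1 : ((k : ℝ≥0∞))⁻¹ ^ (N + 1) = ENNReal.ofReal ((1 / (k : ℝ)) ^ (N + 1)) := by
            rw [ENNReal.ofReal_pow (by positivity), one_div,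
              ENNReal.ofReal_inv_of_pos hk0', ENNReal.ofReal_natCast]
          have e3 : ENNReal.ofReal (((1 / (m : ℝ)) ^ (N + 1)) ^ α) =
              (ENNReal.ofReal ((1 / (m : ℝ)) ^ (N + 1))) ^ α :=
            (ENNReal.ofReal_rpow_of_pos (by positivity)).symm
          rw [e1, ← hrpow (N + 1), e3]
          have h4 : ENNReal.ofReal ((1 / (m : ℝ)) ^ (N + 1)) ≤ EMetric.diam s := by
            have h5 : ENNReal.ofReal ((1 / (m : ℝ)) ^ (N + 1)) ≤ ENNReal.ofReal δ :=
              ENNReal.ofReal_le_ofReal hN1.le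
            rwa [hδ, ENNReal.ofReal_toReal hfin] at h5
          exact ENNReal.rpow_le_rpow h4 hα0
        exact hνb.trans hkey
    have hνE : 0 < ν E := by
      have h1 : (1 : ℝ≥0∞) ≤ μ E := Stmt11Aux.mu_E T hT hm2 hk0 E hE
      have h2 : ν E = (5 * (k : ℝ≥0∞))⁻¹ * μ E := rfl
      rw [h2]
      exact ENNReal.mul_pos (by simp [h5kt]) (lt_of_lt_of_le one_pos h1).ne'
    have hne : μH[α] E ≠ 0 := by
      have := lt_of_lt_of_le hνE (hν_le E)
      exact this.ne'
    have hfinal : (↑(α.toNNReal) : ℝ≥0∞) ≤ dimH E := by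
      refine le_dimH_of_hausdorffMeasure_ne_zero ?_
      rwa [Real.coe_toNNReal α hα0]
    exact hfinal
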